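/- A real Banach space X has the λ-bounded approximation property (λ-BAP) if and only if the Banach algebra F̄(X) of approximable operators on X has a λ-bounded left approximate identity (λ-BLAI). -/

import Mathlib

set_option maxSynthPendingDepth 3

open Filter Topology Metric NormedSpace Function

/-- `u` is a finite-rank operator: its range is finite-dimensional. -/
def FinRankOp {X Y : Type*} [NormedAddCommGroup X] [NormedSpace ℝ X]
    [NormedAddCommGroup Y] [NormedSpace ℝ Y] (u : X →L[ℝ] Y) : Prop :=
  FiniteDimensional ℝ (LinearMap.range (u : X →ₗ[ℝ] Y))

/-- `u` is approximable: a limit in operator norm of finite-rank operators. -/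
def ApproxOp {X Y : Type*} [NormedAddCommGroup X] [NormedSpace ℝ X]
    [NormedAddCommGroup Y] [NormedSpace ℝ Y] (u : X →L[ℝ] Y) : Prop :=
  u ∈ closure {f : X →L[ℝ] Y | FinRankOp f}

/-- `u` is a compact operator: it maps the closed unit ball to a relatively compact set. -/
def CompactOp {X Y : Type*} [NormedAddCommGroup X] [NormedSpace ℝ X]
    [NormedAddCommGroup Y] [NormedSpace ℝ Y] (u : X →L[ℝ] Y) : Prop :=
  IsCompact (closure (u '' Metric.closedBall 0 1))

/-- `Y` has the λ-bounded approximation property (λ-BAP). -/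
def HasBAP (Y : Type*) [NormedAddCommGroup Y] [NormedSpace ℝ Y] (l : ℝ) : Prop :=
  ∀ K : Set Y, IsCompact K → ∀ ε : ℝ, 0 < ε →
    ∃ u : Y →L[ℝ] Y, FinRankOp u ∧ ‖u‖ ≤ l ∧ ∀ x ∈ K, ‖u x - x‖ < ε

/-- The Banach algebra F̄(X) of approximable operators on `X` has a λ-bounded left
approximate identity: a net `(e i)` of approximable operators with `‖e i‖ ≤ λ` such that
`‖e i * x - x‖ → 0` for every approximable operator `x` (multiplication is composition). -/
def ApproxAlgHasBLAI (X : Type u) [NormedAddCommGroup X] [NormedSpace ℝ X] (l : ℝ) : Prop :=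
  ∃ (ι : Type u) (_ : Preorder ι) (_ : Nonempty ι) (_ : IsDirected ι (· ≤ ·))
    (e : ι → X →L[ℝ] X),
    (∀ i, ApproxOp (e i) ∧ ‖e i‖ ≤ l) ∧
    ∀ x : X →L[ℝ] X, ApproxOp x →
      Tendsto (fun i => ‖(e i).comp x - x‖) atTop (𝓝 (0 : ℝ))

section Helpers

variable {X Y : Type*} [NormedAddCommGroup X] [NormedSpace ℝ X]
  [NormedAddCommGroup Y] [NormedSpace ℝ Y]

lemma opNorm_le_of_unit' (T : X →L[ℝ] Y) {c : ℝ} (hc : 0 ≤ c)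
    (h : ∀ v : X, ‖v‖ ≤ 1 → ‖T v‖ ≤ c) : ‖T‖ ≤ c := by
  refine T.opNorm_le_bound hc (fun v => ?_)
  rcases eq_or_ne v 0 with rfl | hv
  · simp [hc]
  · have hnv : (0:ℝ) < ‖v‖ := norm_pos_iff.2 hv
    have h1 : ‖T (‖v‖⁻¹ • v)‖ ≤ c := h _ (by simp [norm_smul, abs_of_pos hnv, inv_mul_cancel₀ hnv.ne'])
    rw [map_smul, norm_smul, norm_inv, norm_norm] at h1
    calc ‖T v‖ = ‖v‖ * (‖v‖⁻¹ * ‖T v‖) := by field_simp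
    _ ≤ c * ‖v‖ := by rw [mul_comm]; exact mul_le_mul_of_nonneg_right h1 hnv.le

lemma finrank_closure_image_compact (f : X →L[ℝ] Y)
    (hf : FiniteDimensional ℝ (LinearMap.range (f : X →ₗ[ℝ] Y))) :
    IsCompact (closure (f '' Metric.closedBall 0 1)) := by
  set S := LinearMap.range (f : X →ₗ[ℝ] Y)
  haveI : FiniteDimensional ℝ S := hf
  set g : X →L[ℝ] S := f.codRestrict S (fun x => LinearMap.mem_range_self _ x)
  have hb : Bornology.IsBounded (g '' Metric.closedBall 0 1) :=
    g.lipschitz.isBounded_image (isBounded_closedBall)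
  have hc : IsCompact (closure (g '' Metric.closedBall 0 1)) := hb.isCompact_closure
  have hC : IsCompact ((Subtype.val : S → Y) '' closure (g '' Metric.closedBall 0 1)) :=
    hc.image continuous_subtype_val
  refine hC.of_isClosed_subset isClosed_closure ?_
  refine closure_minimal ?_ hC.isClosed
  rintro y ⟨x, hx, rfl⟩
  exact ⟨g x, subset_closure ⟨x, hx, rfl⟩, rfl⟩

end Helpers

set_option maxHeartbeats 2000000 in
/-- Theorem A (approximable case): `X` has λ-BAP iff F̄(X) has a λ-BLAI. -/
theorem bap_iff_approx_blai (X : Type u) [NormedAddCommGroup X] [NormedSpace ℝ X]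
    [CompleteSpace X] (l : ℝ) (hl : 1 ≤ l) :
    HasBAP X l ↔ ApproxAlgHasBLAI X l := by
  have hl0 : (0:ℝ) < l := lt_of_lt_of_le one_pos hl
  constructor
  · -- Forward: BAP → BLAI
    intro hbap
    classical
    let ι := {p : Set X × ℕ // IsCompact p.1}
    letI : Preorder ι :=
      { le := fun p q => p.1.1 ⊆ q.1.1 ∧ p.1.2 ≤ q.1.2
        le_refl := fun p => ⟨subset_rfl, le_rfl⟩
        le_trans := fun p q r h1 h2 => ⟨h1.1.trans h2.1, h1.2.trans h2.2⟩ }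
    haveI hne : Nonempty ι := ⟨⟨(∅, 0), isCompact_empty⟩⟩
    haveI hdir : IsDirected ι (· ≤ ·) :=
      ⟨fun p q => ⟨⟨(p.1.1 ∪ q.1.1, max p.1.2 q.1.2), p.2.union q.2⟩,
        ⟨Set.subset_union_left, le_max_left _ _⟩,
        ⟨Set.subset_union_right, le_max_right _ _⟩⟩⟩
    have hch : ∀ i : ι, ∃ u : X →L[ℝ] X, FinRankOp u ∧ ‖u‖ ≤ l ∧
        ∀ x ∈ i.1.1, ‖u x - x‖ < 1/(i.1.2+1) :=
      fun i => hbap i.1.1 i.2 _ (by positivity)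
    choose e he1 he2 he3 using hch
    refine ⟨ι, inferInstance, hne, hdir, e, fun i => ⟨subset_closure (he1 i), he2 i⟩, ?_⟩
    intro x hx
    rw [NormedAddCommGroup.tendsto_nhds_zero]
    intro ε hε
    set δ : ℝ := ε/(3*(l+1)) with hδdef
    have hδ0 : 0 < δ := by positivity
    obtain ⟨f, hfF, hfd⟩ := Metric.mem_closure_iff.1 hx δ hδ0
    rw [dist_eq_norm] at hfd
    have hKc : IsCompact (closure (f '' Metric.closedBall 0 1)) :=
      finrank_closure_image_compact f hfF
    obtain ⟨n, hn⟩ := exists_nat_one_div_lt (show (0:ℝ) < ε/3 by positivity)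
    refine (atTop_basis.eventually_iff).2 ⟨⟨(closure (f '' Metric.closedBall 0 1), n), hKc⟩,
      trivial, ?_⟩
    rintro i ⟨hKsub, hnle⟩
    rw [Real.norm_eq_abs, abs_of_nonneg (norm_nonneg _)]
    have hmid : ‖(e i).comp f - f‖ ≤ 1/(n+1) := by
      refine opNorm_le_of_unit' _ (by positivity) (fun v hv => ?_)
      have hfv : f v ∈ i.1.1 :=
        hKsub (subset_closure ⟨v, by simpa [Metric.mem_closedBall, dist_eq_norm] using hv, rfl⟩)
      have h1 := he3 i (f v) hfv
      have h2 : 1/((i.1.2:ℝ)+1) ≤ 1/((n:ℝ)+1) := by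
        apply one_div_le_one_div_of_le (by positivity)
        exact_mod_cast Nat.add_le_add_right (show n ≤ i.1.2 from hnle) 1
      calc ‖((e i).comp f - f) v‖ = ‖e i (f v) - f v‖ := rfl
        _ ≤ 1/((i.1.2:ℝ)+1) := (he3 i (f v) hfv).le
        _ ≤ 1/((n:ℝ)+1) := h2
    have hdec : (e i).comp x - x = (e i).comp (x - f) + ((e i).comp f - f) + (f - x) := by
      simp only [ContinuousLinearMap.comp_sub]; abel
    have hb1 : ‖(e i).comp (x - f)‖ ≤ l * ‖x - f‖ := by
      calc ‖(e i).comp (x - f)‖ ≤ ‖e i‖ * ‖x - f‖ := ContinuousLinearMap.opNorm_comp_le _ _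
        _ ≤ l * ‖x - f‖ := mul_le_mul_of_nonneg_right (he2 i) (norm_nonneg _)
    have hfx : ‖f - x‖ = ‖x - f‖ := norm_sub_rev _ _
    have htot : ‖(e i).comp x - x‖ ≤ l * ‖x - f‖ + 1/((n:ℝ)+1) + ‖x - f‖ := by
      rw [hdec]
      calc ‖(e i).comp (x - f) + ((e i).comp f - f) + (f - x)‖
          ≤ ‖(e i).comp (x - f)‖ + ‖(e i).comp f - f‖ + ‖f - x‖ := norm_add₃_le
        _ ≤ l * ‖x - f‖ + 1/((n:ℝ)+1) + ‖x - f‖ := by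
            rw [hfx]; exact add_le_add (add_le_add hb1 hmid) le_rfl
    have h3 : (l+1) * (ε/(3*(l+1))) = ε/3 := by field_simp
    have h4 : (l+1) * ‖x - f‖ < (l+1) * δ :=
      mul_lt_mul_of_pos_left hfd (by linarith)
    rw [hδdef] at h4
    nlinarith [norm_nonneg (x - f)]
  · -- Backward: BLAI → BAP
    rintro ⟨ι, pre, hne, hdir, e, hbd, hconv⟩
    intro K hK ε hε
    by_cases hX : ∃ x₀ : X, x₀ ≠ 0
    · obtain ⟨x₀, hx₀⟩ := hX
      obtain ⟨φ, hφ1, -⟩ := exists_dual_vector ℝ x₀ (norm_ne_zero_iff.2 hx₀)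
      have hpt : ∀ x : X, Tendsto (fun i => ‖e i x - x‖) atTop (𝓝 (0:ℝ)) := by
        intro x
        have hfr : FinRankOp (φ.smulRight x) := by
          have hle : LinearMap.range (φ.smulRight x : X →ₗ[ℝ] X) ≤ Submodule.span ℝ {x} := by
            rintro y ⟨v, rfl⟩
            exact Submodule.smul_mem _ _ (Submodule.mem_span_singleton_self x)
          exact Submodule.finiteDimensional_of_le hle
        have h0 := hconv _ (subset_closure hfr)
        have hEq : ∀ i, ‖(e i).comp (φ.smulRight x) - φ.smulRight x‖ = ‖e i x - x‖ := by
          intro i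
          have h1 : (e i).comp (φ.smulRight x) - φ.smulRight x = φ.smulRight (e i x - x) := by
            ext v
            simp [ContinuousLinearMap.smulRight_apply, smul_sub]
          rw [h1, ContinuousLinearMap.norm_smulRight_apply, hφ1, one_mul]
        simpa only [hEq] using h0
      -- bound on K
      obtain ⟨R, hR⟩ := hK.isBounded.exists_norm_le
      set M : ℝ := max R 1 with hMdef
      have hM1 : (1:ℝ) ≤ M := le_max_right _ _
      have hM0 : (0:ℝ) < M := lt_of_lt_of_le one_pos hM1
      have hMK : ∀ x ∈ K, ‖x‖ ≤ M := fun x hx => (hR x hx).trans (le_max_left _ _)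
      -- finite net
      set r : ℝ := ε/(4*(l+1)) with hrdef
      have hr0 : 0 < r := by positivity
      obtain ⟨t, htf, htK⟩ := (Metric.totallyBounded_iff).1 hK.totallyBounded r hr0
      have hev : ∀ᶠ i in atTop, ∀ y ∈ t, ‖e i y - y‖ < ε/4 := by
        rw [Filter.eventually_all_finite htf]
        intro y _
        exact (hpt y).eventually_lt_const (by positivity)
      haveI : (atTop : Filter ι).NeBot := atTop_neBot
      obtain ⟨i, hi⟩ := hev.exists
      have hKe : ∀ x ∈ K, ‖e i x - x‖ < ε/2 := by
        intro x hx
        obtain ⟨y, hy, hxy⟩ := Set.mem_iUnion₂.1 (htK hx)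
        rw [Metric.mem_ball, dist_eq_norm] at hxy
        have hdec : e i x - x = e i (x - y) + (e i y - y) + (y - x) := by
          simp only [map_sub]; abel
        have hb1 : ‖e i (x - y)‖ ≤ l * ‖x - y‖ := by
          calc ‖e i (x - y)‖ ≤ ‖e i‖ * ‖x - y‖ := (e i).le_opNorm _
            _ ≤ l * ‖x - y‖ := mul_le_mul_of_nonneg_right (hbd i).2 (norm_nonneg _)
        have hyx : ‖y - x‖ = ‖x - y‖ := norm_sub_rev _ _
        have htot : ‖e i x - x‖ ≤ l * ‖x - y‖ + ‖e i y - y‖ + ‖x - y‖ := by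
          rw [hdec]
          calc ‖e i (x - y) + (e i y - y) + (y - x)‖
              ≤ ‖e i (x - y)‖ + ‖e i y - y‖ + ‖y - x‖ := norm_add₃_le
            _ ≤ l * ‖x - y‖ + ‖e i y - y‖ + ‖x - y‖ := by
                rw [hyx]; exact add_le_add (add_le_add hb1 le_rfl) le_rfl
        have h4 : (l+1) * ‖x - y‖ < (l+1) * r := mul_lt_mul_of_pos_left hxy (by linarith)
        have h3 : (l+1) * (ε/(4*(l+1))) = ε/4 := by field_simp
        rw [hrdef, h3] at h4
        have h5 := hi y hy
        nlinarith [norm_nonneg (x - y)]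
      -- approximate e i by a finite-rank operator
      set δ : ℝ := ε/(8*(M+1)) with hδdef
      have hδ0 : 0 < δ := by positivity
      obtain ⟨f, hfF, hfd⟩ := Metric.mem_closure_iff.1 (hbd i).1 δ hδ0
      rw [dist_eq_norm] at hfd
      have hlδ : (0:ℝ) < l + δ := by linarith
      set c : ℝ := l/(l+δ) with hcdef
      have hc0 : 0 < c := by positivity
      have hc1 : c ≤ 1 := by rw [hcdef, div_le_one hlδ]; linarith
      have hfn : ‖f‖ ≤ l + δ := by
        have : ‖f‖ ≤ ‖e i‖ + ‖e i - f‖ := by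
          calc ‖f‖ = ‖e i - (e i - f)‖ := by rw [sub_sub_cancel]
            _ ≤ ‖e i‖ + ‖e i - f‖ := norm_sub_le _ _
        linarith [(hbd i).2, hfd]
      refine ⟨c • f, ?_, ?_, ?_⟩
      · -- FinRankOp
        have hle : LinearMap.range ((c • f : X →L[ℝ] X) : X →ₗ[ℝ] X) ≤ LinearMap.range (f : X →ₗ[ℝ] X) := by
          rintro y ⟨v, rfl⟩
          exact ⟨c • v, by simp⟩
        haveI : FiniteDimensional ℝ (LinearMap.range (f : X →ₗ[ℝ] X)) := hfF
        exact Submodule.finiteDimensional_of_le hle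
      · -- norm ≤ l
        rw [norm_smul, Real.norm_eq_abs, abs_of_pos hc0]
        calc c * ‖f‖ ≤ c * (l + δ) := mul_le_mul_of_nonneg_left hfn hc0.le
          _ = l := by rw [hcdef, div_mul_cancel₀ _ hlδ.ne']
      · -- approximation on K
        intro x hx
        have hufd : ‖c • f - e i‖ < 2 * δ := by
          have h1 : ‖c • f - f‖ ≤ δ := by
            have : c • f - f = (c - 1) • f := by rw [sub_smul, one_smul]
            rw [this, norm_smul, Real.norm_eq_abs, abs_of_nonpos (by linarith)]
            have h2 : -(c - 1) = δ/(l+δ) := by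
              rw [hcdef, neg_sub, eq_div_iff hlδ.ne', sub_mul, one_mul,
                div_mul_cancel₀ _ hlδ.ne']
              ring
            rw [h2]
            calc δ/(l+δ) * ‖f‖ ≤ δ/(l+δ) * (l+δ) :=
                mul_le_mul_of_nonneg_left hfn (by positivity)
              _ = δ := div_mul_cancel₀ _ hlδ.ne'
          have h3 : ‖f - e i‖ < δ := by rwa [norm_sub_rev] at hfd
          calc ‖c • f - e i‖ = ‖(c • f - f) + (f - e i)‖ := by rw [sub_add_sub_cancel]
            _ ≤ ‖c • f - f‖ + ‖f - e i‖ := norm_add_le _ _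
            _ < 2 * δ := by linarith
        have hb1 : ‖(c • f) x - e i x‖ ≤ ‖c • f - e i‖ * ‖x‖ := (c • f - e i).le_opNorm x
        have hb2 : ‖c • f - e i‖ * ‖x‖ ≤ ‖c • f - e i‖ * M :=
          mul_le_mul_of_nonneg_left (hMK x hx) (norm_nonneg _)
        have hb3 : ‖c • f - e i‖ * M < 2 * δ * M := mul_lt_mul_of_pos_right hufd hM0
        have h2δM : 2 * δ * M < ε/2 := by
          have hMp : (0:ℝ) < M + 1 := by linarith
          have hkey : δ * (M+1) = ε/8 := by
            rw [hδdef]; field_simp [hMp.ne']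
          nlinarith [hδ0, hε, mul_pos hδ0 hM0]
        have htri : ‖(c • f) x - x‖ ≤ ‖(c • f) x - e i x‖ + ‖e i x - x‖ := by
          simpa [dist_eq_norm] using dist_triangle ((c • f) x) (e i x) x
        have := hKe x hx
        linarith
    · -- trivial space
      push_neg at hX
      haveI : Subsingleton X := ⟨fun a b => by rw [hX a, hX b]⟩
      haveI : FiniteDimensional ℝ X := inferInstance
      refine ⟨ContinuousLinearMap.id ℝ X, ?_, ?_, ?_⟩
      · show FiniteDimensional ℝ (LinearMap.range (ContinuousLinearMap.id ℝ X : X →ₗ[ℝ] X))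
        infer_instance
      · exact le_trans (ContinuousLinearMap.norm_id_le) hl
      · intro x _
        rw [ContinuousLinearMap.id_apply, sub_self, norm_zero]
        exact hε
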